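/- arXiv:1604.06973 — 2 statements merged into one kernel-verified Lean document; each statement's English description precedes it below -/
import Mathlib

section
/- Let (θ,θ') be a factor pair of a set X such that X/θ is infinite, and let p be a prime. Then: (1) (θ,θ') is the least upper bound in Fact(X) of the set of p-atoms below it; (2) θ is the intersection of all φ such that (φ,φ') is a p-atom with (φ,φ') ≤ (θ,θ') for some φ'; (3) θ' is the union of all φ' such that (φ,φ') is a p-atom with (φ,φ') ≤ (θ,θ') for some φ. -/
/-- A factor pair is a pair of equivalence relations with `θ ∩ θ' = Δ` and `θ ∘ θ' = ∇`. -/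
def IsFactorPair {X : Type*} (θ θ' : Setoid X) : Prop :=
  (∀ x y : X, θ x y ∧ θ' x y ↔ x = y) ∧
  ∀ x y : X, Relation.Comp (⇑θ) (⇑θ') x y

/-- `Fact X`, the set of factor pairs of `X`. -/
def FactPair (X : Type*) : Type _ :=
  {p : Setoid X × Setoid X // IsFactorPair p.1 p.2}

/-- The order on `Fact X`: `(θ,θ') ≤ (φ,φ')` iff `φ ⊆ θ`, `θ' ⊆ φ'` and `φ∘θ' = θ'∘φ`. -/
def FactLE {X : Type*} (p q : FactPair X) : Prop :=
  q.1.1 ≤ p.1.1 ∧ p.1.2 ≤ q.1.2 ∧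
    Relation.Comp (⇑q.1.1) (⇑p.1.2) = Relation.Comp (⇑p.1.2) (⇑q.1.1)

def FactLT {X : Type*} (p q : FactPair X) : Prop :=
  FactLE p q ∧ p ≠ q

/-- The orthocomplementation `(θ,θ')^⊥ = (θ',θ)` on `Fact X`. -/
def FactPerp {X : Type*} (p : FactPair X) : FactPair X :=
  ⟨(p.1.2, p.1.1), by
    obtain ⟨h1, h2⟩ := p.2
    refine ⟨fun x y => ⟨fun h => (h1 x y).1 ⟨h.2, h.1⟩, ?_⟩, fun x y => ?_⟩
    · rintro rfl
      exact ⟨p.1.2.refl' x, p.1.1.refl' x⟩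
    · obtain ⟨z, hz1, hz2⟩ := h2 y x
      exact ⟨z, p.1.2.symm' hz2, p.1.1.symm' hz1⟩⟩

/-- `0 = (∇,Δ)` in `Fact X`. -/
def FactZero (X : Type*) : FactPair X :=
  ⟨(⊤, ⊥), by
    refine ⟨fun x y => ⟨fun h => ?_, ?_⟩, fun x y => ⟨y, ?_, ?_⟩⟩
    · simpa [Setoid.bot_def] using h.2
    · rintro rfl
      exact ⟨(⊤ : Setoid X).refl' x, (⊥ : Setoid X).refl' x⟩
    · simp [Setoid.top_def]
    · simp [Setoid.bot_def]⟩

/-- `1 = (Δ,∇)` in `Fact X`. -/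
def FactOne (X : Type*) : FactPair X :=
  ⟨(⊥, ⊤), by
    refine ⟨fun x y => ⟨fun h => ?_, ?_⟩, fun x y => ⟨x, ?_, ?_⟩⟩
    · simpa [Setoid.bot_def] using h.1
    · rintro rfl
      exact ⟨(⊥ : Setoid X).refl' x, (⊤ : Setoid X).refl' x⟩
    · simp [Setoid.bot_def]
    · simp [Setoid.top_def]⟩

/-- An atom of `Fact X`. -/
def IsFactAtom {X : Type*} (a : FactPair X) : Prop :=
  FactLT (FactZero X) a ∧ ∀ x : FactPair X, FactLT (FactZero X) x → ¬ FactLT x a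

/-- An `n`-relation: every equivalence class has exactly `n` elements. -/
def IsNRel {X : Type*} (n : ℕ) (θ : Setoid X) : Prop :=
  ∀ x : X, Nat.card {y // θ x y} = n

/-- A `p`-atom: an atom `(φ,φ')` such that `φ'` is a `p`-relation. -/
def IsPAtom {X : Type*} (p : ℕ) (a : FactPair X) : Prop :=
  IsFactAtom a ∧ IsNRel p a.1.2

/-- The image `σ(θ) = {(σ x, σ y) : (x,y) ∈ θ}` of an equivalence relation under a
permutation. -/
def permSetoid {X : Type*} (σ : Equiv.Perm X) (θ : Setoid X) : Setoid X :=
  ⟨fun a b => θ (σ.symm a) (σ.symm b),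
    ⟨fun a => θ.refl' _, fun h => θ.symm' h, fun h1 h2 => θ.trans' h1 h2⟩⟩

/-- The action `Γ(σ)(θ,θ') = (σ(θ),σ(θ'))` of a permutation on factor pairs. -/
def permFactPair {X : Type*} (σ : Equiv.Perm X) (t : FactPair X) : FactPair X :=
  ⟨(permSetoid σ t.1.1, permSetoid σ t.1.2), by
    obtain ⟨h1, h2⟩ := t.2
    refine ⟨fun x y => ⟨fun h => ?_, ?_⟩, fun x y => ?_⟩
    · exact σ.symm.injective ((h1 (σ.symm x) (σ.symm y)).1 ⟨h.1, h.2⟩)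
    · rintro rfl
      exact ⟨t.1.1.refl' _, t.1.2.refl' _⟩
    · obtain ⟨w, hw1, hw2⟩ := h2 (σ.symm x) (σ.symm y)
      refine ⟨σ w, ?_, ?_⟩
      · show t.1.1 (σ.symm x) (σ.symm (σ w))
        simpa using hw1
      · show t.1.2 (σ.symm (σ w)) (σ.symm y)
        simpa using hw2⟩

/-- An automorphism of `Fact X`: a bijection preserving `≤` in both directions and
commuting with `⊥`. -/
def IsFactAut {X : Type*} (α : FactPair X → FactPair X) : Prop :=
  Function.Bijective α ∧
  (∀ p q : FactPair X, FactLE p q ↔ FactLE (α p) (α q)) ∧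
  ∀ p : FactPair X, α (FactPerp p) = FactPerp (α p)

/-- `Eq*(X)`: the equivalence relations on `X` that are `n`-relations for some `n ≥ 1`. -/
def EqStar (X : Type*) : Type _ :=
  {θ : Setoid X // ∃ n : ℕ, 0 < n ∧ IsNRel n θ}

/-- A regular equivalence relation: any two classes are equinumerous. -/
def IsRegularRel {X : Type*} (θ : Setoid X) : Prop :=
  ∀ x y : X, Nonempty ({z // θ x z} ≃ {z // θ y z})

/-- The action of a permutation on `Eq*(X)`. -/
def permEqStar {X : Type*} (σ : Equiv.Perm X) (θ : EqStar X) : EqStar X :=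
  ⟨permSetoid σ θ.1, by
    obtain ⟨n, hn, hrel⟩ := θ.2
    refine ⟨n, hn, fun x => ?_⟩
    have e : {y // (permSetoid σ θ.1) x y} ≃ {y // θ.1 (σ.symm x) y} :=
      σ.symm.subtypeEquiv fun y => Iff.rfl
    rw [Nat.card_congr e]
    exact hrel (σ.symm x)⟩

section AuxForMainTheorem

variable {X : Type*}

private lemma factor_uniq {θ θ' : Setoid X} (h : IsFactorPair θ θ') {x y : X}
    (h1 : θ x y) (h2 : θ' x y) : x = y := (h.1 x y).1 ⟨h1, h2⟩

private lemma factor_comp' {θ θ' : Setoid X} (h : IsFactorPair θ θ') (x y : X) :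
    ∃ z, θ' x z ∧ θ z y := by
  obtain ⟨z, hz1, hz2⟩ := h.2 y x
  exact ⟨z, θ'.symm' hz2, θ.symm' hz1⟩

/-- Each `θ'`-class is a transversal of `θ`. -/
private noncomputable def classEquivQuotient {θ θ' : Setoid X} (h : IsFactorPair θ θ')
    (x : X) : {y // θ' x y} ≃ Quotient θ := by
  refine Equiv.ofBijective (fun y => Quotient.mk θ y.1) ⟨?_, ?_⟩
  · rintro ⟨y, hy⟩ ⟨z, hz⟩ hyz
    exact Subtype.ext (factor_uniq h (Quotient.exact hyz) (θ'.trans' (θ'.symm' hy) hz))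
  · intro b
    obtain ⟨u, rfl⟩ := Quotient.exists_rep b
    obtain ⟨z, hz1, hz2⟩ := factor_comp' h x u
    exact ⟨⟨z, hz1⟩, Quotient.sound hz2⟩

private lemma dvd_card_of_classes {F : Type*} [Finite F] (s : Setoid F) (n : ℕ)
    (hn : ∀ u : F, Nat.card {v // s u v} = n) : n ∣ Nat.card F := by
  classical
  cases nonempty_fintype F
  have hfib : ∀ q : Quotient s, Nat.card {v // Quotient.mk s v = q} = n := by
    intro q
    rw [← hn q.out]
    refine Nat.card_congr (Equiv.subtypeEquivRight fun v => ?_)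
    constructor
    · intro hv
      exact s.symm' (Quotient.exact (hv.trans q.out_eq.symm))
    · intro hv
      exact (Quotient.sound (s.symm' hv)).trans q.out_eq
  have hsum : Nat.card F = ∑ q : Quotient s, Nat.card {v // Quotient.mk s v = q} := by
    rw [Nat.card_congr (Equiv.sigmaFiberEquiv (Quotient.mk s)).symm, Nat.card_eq_fintype_card,
      Fintype.card_sigma]
    simp [Nat.card_eq_fintype_card]
  rw [hsum]
  simp only [hfib, Finset.sum_const, smul_eq_mul]
  exact dvd_mul_left n _

private lemma factLE_trans {a t u : FactPair X} (hat : FactLE a t) (htu : FactLE t u) :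
    FactLE a u := by
  obtain ⟨hta, hat2, hcomm1⟩ := hat
  obtain ⟨hut, htu2, hcomm2⟩ := htu
  refine ⟨hut.trans hta, hat2.trans htu2, ?_⟩
  have key : ∀ x y, Relation.Comp (⇑u.1.1) (⇑a.1.2) x y →
      Relation.Comp (⇑a.1.2) (⇑u.1.1) x y := by
    rintro x y ⟨z, hxz, hzy⟩
    obtain ⟨w, hw1, hw2⟩ : ∃ w, a.1.2 x w ∧ t.1.1 w y := by
      have hc : Relation.Comp (⇑t.1.1) (⇑a.1.2) x y :=
        ⟨z, Setoid.le_def.mp hut hxz, hzy⟩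
      rw [hcomm1] at hc; exact hc
    obtain ⟨v, hv1, hv2⟩ : ∃ v, t.1.2 x v ∧ u.1.1 v y := by
      have hc : Relation.Comp (⇑u.1.1) (⇑t.1.2) x y :=
        ⟨z, hxz, Setoid.le_def.mp hat2 hzy⟩
      rw [hcomm2] at hc; exact hc
    have hwv : w = v := by
      apply factor_uniq t.2
      · exact t.1.1.trans' hw2 (t.1.1.symm' (Setoid.le_def.mp hut hv2))
      · exact t.1.2.trans' (t.1.2.symm' (Setoid.le_def.mp hat2 hw1)) hv1
    exact ⟨w, hw1, hwv ▸ hv2⟩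
  funext x y
  apply propext
  constructor
  · exact key x y
  · rintro ⟨z, hxz, hzy⟩
    obtain ⟨w, hw1, hw2⟩ := key y x ⟨z, u.1.1.symm' hzy, a.1.2.symm' hxz⟩
    exact ⟨w, u.1.1.symm' hw2, a.1.2.symm' hw1⟩

private lemma isFactAtom_of_isNRel [Nonempty X] {p : ℕ} (hp : p.Prime) (a : FactPair X)
    (hrel : IsNRel p a.1.2) : IsFactAtom a := by
  have hbot_card : ∀ x : X, Nat.card {y // (⊥ : Setoid X) x y} = 1 := by
    intro x
    rw [Nat.card_eq_one_iff_unique]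
    constructor
    · constructor
      rintro ⟨y, hy⟩ ⟨z, hz⟩
      simp only [Setoid.bot_def] at hy hz
      exact Subtype.ext (hy.symm.trans hz)
    · exact ⟨⟨x, (⊥ : Setoid X).refl' x⟩⟩
  have hle0 : ∀ b : FactPair X, FactLE (FactZero X) b := by
    intro b
    refine ⟨Setoid.le_def.mpr fun {x y} _ => by show (⊤ : Setoid X) x y; rw [Setoid.top_def]; trivial,
      Setoid.le_def.mpr fun {x y} hxy => by
        change (⊥ : Setoid X) x y at hxy
        simp only [Setoid.bot_def] at hxy
        exact hxy ▸ b.1.2.refl' x, ?_⟩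
    funext x y
    apply propext
    constructor
    · rintro ⟨z, h1, h2⟩
      change (⊥ : Setoid X) z y at h2
      simp only [Setoid.bot_def] at h2
      exact ⟨x, (FactZero X).1.2.refl' x, h2 ▸ h1⟩
    · rintro ⟨z, h1, h2⟩
      change (⊥ : Setoid X) x z at h1
      simp only [Setoid.bot_def] at h1
      exact ⟨y, h1 ▸ h2, (FactZero X).1.2.refl' y⟩
  constructor
  · refine ⟨hle0 a, fun heq => ?_⟩
    obtain ⟨x⟩ := ‹Nonempty X›
    have h2 := hrel x
    rw [← heq] at h2
    have h3 : (1 : ℕ) = p := (hbot_card x).symm.trans h2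
    have := hp.one_lt
    omega
  · intro x h0x hxa
    obtain ⟨⟨χ, χ'⟩, hx⟩ := x
    obtain ⟨⟨ha1, ha2, _⟩, hne⟩ := hxa
    set n := Nat.card (Quotient χ) with hn
    have hclass : ∀ z : X, Nat.card {y // χ' z y} = n :=
      fun z => Nat.card_congr (classEquivQuotient hx z)
    obtain ⟨z0⟩ := ‹Nonempty X›
    have hcard : Nat.card {y // a.1.2 z0 y} = p := hrel z0
    have hfin : Finite {y // a.1.2 z0 y} :=
      Nat.finite_of_card_ne_zero (by rw [hcard]; exact hp.pos.ne')
    let s : Setoid {y // a.1.2 z0 y} :=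
      ⟨fun u v => χ' u.1 v.1,
        ⟨fun u => χ'.refl' _, fun hh => χ'.symm' hh, fun h1 h2 => χ'.trans' h1 h2⟩⟩
    have hs : ∀ u : {y // a.1.2 z0 y}, Nat.card {v // s u v} = n := by
      intro u
      rw [← hclass u.1]
      refine Nat.card_congr (Equiv.ofBijective (fun v => ⟨v.1.1, v.2⟩) ⟨?_, ?_⟩)
      · intro v v' hvv
        have hvv' : (⟨v.1.1, v.2⟩ : {w // χ' u.1 w}) = ⟨v'.1.1, v'.2⟩ := hvv
        have hval : v.1.1 = v'.1.1 :=
          congrArg (fun (w : {w // χ' u.1 w}) => w.1) hvv'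
        exact Subtype.ext (Subtype.ext hval)
      · intro w
        refine ⟨⟨⟨w.1, a.1.2.trans' u.2 (Setoid.le_def.mp ha2 w.2)⟩, w.2⟩, Subtype.ext rfl⟩
    have hdvd : n ∣ p := hcard ▸ dvd_card_of_classes s n hs
    rcases hp.eq_one_or_self_of_dvd n hdvd with h1 | hnp
    · -- n = 1 : x = 0
      have hsing : ∀ u v : X, χ' u v → u = v := by
        intro u v huv
        have hc := hclass u
        rw [h1] at hc
        rw [Nat.card_eq_one_iff_unique] at hc
        have := hc.1
        exact congrArg Subtype.val
          (Subsingleton.elim (⟨u, χ'.refl' u⟩ : {y // χ' u y}) ⟨v, huv⟩)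
      apply h0x.2
      refine Subtype.ext (Prod.ext ?_ ?_)
      · apply Setoid.ext; intro u v
        constructor
        · intro _
          obtain ⟨w, hw1, hw2⟩ := hx.2 u v
          exact (hsing w v hw2) ▸ hw1
        · intro _
          show (⊤ : Setoid X) u v
          rw [Setoid.top_def]; trivial
      · apply Setoid.ext; intro u v
        constructor
        · intro huv
          change (⊥ : Setoid X) u v at huv
          simp only [Setoid.bot_def] at huv
          exact huv ▸ χ'.refl' u
        · intro huv
          show (⊥ : Setoid X) u v
          simp only [Setoid.bot_def]
          exact hsing u v huv
    · -- n = p : x = a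
      have hx2 : ∀ u v : X, a.1.2 u v → χ' u v := by
        intro u v huv
        have hsub : {w | χ' u w} ⊆ {w | a.1.2 u w} := fun w hw => Setoid.le_def.mp ha2 hw
        have hfin2 : Set.Finite {w | a.1.2 u w} := by
          have : Finite {w // a.1.2 u w} :=
            Nat.finite_of_card_ne_zero (by rw [hrel u]; exact hp.pos.ne')
          exact Set.finite_coe_iff.mp this
        have e1 : Nat.card ({w | a.1.2 u w} : Set X) = p := hrel u
        have e2 : Nat.card ({w | χ' u w} : Set X) = p := (hclass u).trans hnp
        have hcards : ({w | a.1.2 u w} : Set X).ncard ≤ ({w | χ' u w} : Set X).ncard := by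
          rw [← Nat.card_coe_set_eq, ← Nat.card_coe_set_eq, e1, e2]
        have heqset := Set.eq_of_subset_of_ncard_le hsub hcards hfin2
        have : v ∈ {w | χ' u w} := heqset ▸ (huv : v ∈ {w | a.1.2 u w})
        exact this
      have hχ'eq : χ' = a.1.2 :=
        Setoid.ext fun u v => ⟨fun hh => Setoid.le_def.mp ha2 hh, hx2 u v⟩
      have hχeq : χ = a.1.1 := by
        apply Setoid.ext; intro u v
        constructor
        · intro huv
          obtain ⟨w, hw1, hw2⟩ := a.2.2 u v
          have hχuw : χ u w := Setoid.le_def.mp ha1 hw1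
          have hχwv : χ w v := χ.trans' (χ.symm' hχuw) huv
          have hwv : w = v := factor_uniq hx hχwv (hx2 w v hw2)
          exact hwv ▸ hw1
        · exact fun huv => Setoid.le_def.mp ha1 huv
      exact hne (Subtype.ext (Prod.ext hχeq hχ'eq))

end AuxForMainTheorem

section ConstructionForMainTheorem

variable {X : Type*}

private lemma master_construction {θ θ' : Setoid X} (h : IsFactorPair θ θ') {p : ℕ}
    (hp : p.Prime) [Nonempty X] (e : Quotient θ ≃ Quotient θ × Fin p) :
    ∃ a : FactPair X, IsPAtom p a ∧ FactLE a ⟨(θ, θ'), h⟩ ∧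
      (∀ u v : X, a.1.1 u v ↔ (e (Quotient.mk θ u)).2 = (e (Quotient.mk θ v)).2) ∧
      (∀ u v : X, a.1.2 u v ↔ θ' u v ∧ (e (Quotient.mk θ u)).1 = (e (Quotient.mk θ v)).1) := by
  let c1 : X → Quotient θ := Quotient.mk θ
  let φ : Setoid X := ⟨fun u v => (e (c1 u)).2 = (e (c1 v)).2,
    ⟨fun u => rfl, fun hh => hh.symm, fun h1 h2 => h1.trans h2⟩⟩
  let φ' : Setoid X := ⟨fun u v => θ' u v ∧ (e (c1 u)).1 = (e (c1 v)).1,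
    ⟨fun u => ⟨θ'.refl' u, rfl⟩, fun hh => ⟨θ'.symm' hh.1, hh.2.symm⟩,
      fun h1 h2 => ⟨θ'.trans' h1.1 h2.1, h1.2.trans h2.2⟩⟩⟩
  have hfp : IsFactorPair φ φ' := by
    constructor
    · intro u v
      constructor
      · rintro ⟨h1, h2, h3⟩
        have hcc : c1 u = c1 v := e.injective (Prod.ext h3 h1)
        exact factor_uniq h (Quotient.exact hcc) h2
      · rintro rfl
        exact ⟨rfl, θ'.refl' u, rfl⟩
    · intro u v
      obtain ⟨z, hz1, hz2⟩ :=
        factor_comp' h v (e.symm ((e (c1 v)).1, (e (c1 u)).2)).out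
      have hcz : c1 z = e.symm ((e (c1 v)).1, (e (c1 u)).2) :=
        (Quotient.sound hz2).trans (Quotient.out_eq _)
      refine ⟨z, ?_, θ'.symm' hz1, ?_⟩
      · show (e (c1 u)).2 = (e (c1 z)).2
        rw [hcz, e.apply_symm_apply]
      · show (e (c1 z)).1 = (e (c1 v)).1
        rw [hcz, e.apply_symm_apply]
  have hnrel : IsNRel p φ' := by
    intro u
    have e1 : {y // φ' u y} ≃ {b : Quotient θ // (e b).1 = (e (c1 u)).1} := by
      refine Equiv.ofBijective (fun y => ⟨c1 y.1, y.2.2.symm⟩) ⟨?_, ?_⟩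
      · rintro ⟨y, hy⟩ ⟨z, hz⟩ hyz
        have hcc : c1 y = c1 z := congrArg Subtype.val hyz
        exact Subtype.ext (factor_uniq h (Quotient.exact hcc) (θ'.trans' (θ'.symm' hy.1) hz.1))
      · rintro ⟨b, hbv⟩
        obtain ⟨z, hz1, hz2⟩ := factor_comp' h u b.out
        have hcz : c1 z = b := (Quotient.sound hz2).trans (Quotient.out_eq _)
        exact ⟨⟨z, hz1, by rw [hcz]; exact hbv.symm⟩, Subtype.ext hcz⟩
    have e2 : {b : Quotient θ // (e b).1 = (e (c1 u)).1} ≃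
        {q : Quotient θ × Fin p // q.1 = (e (c1 u)).1} :=
      e.subtypeEquiv fun b => Iff.rfl
    have e3 : {q : Quotient θ × Fin p // q.1 = (e (c1 u)).1} ≃ Fin p :=
      { toFun := fun q => q.1.2
        invFun := fun j => ⟨((e (c1 u)).1, j), rfl⟩
        left_inv := by
          rintro ⟨⟨b, j⟩, hb⟩
          dsimp at hb
          subst hb
          rfl
        right_inv := fun j => rfl }
    rw [Nat.card_congr ((e1.trans e2).trans e3), Nat.card_eq_fintype_card, Fintype.card_fin]
  refine ⟨⟨(φ, φ'), hfp⟩, ⟨isFactAtom_of_isNRel hp _ hnrel, hnrel⟩,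
    ⟨?_, Setoid.le_def.mpr fun {u v} huv => huv.1, ?_⟩,
    fun u v => Iff.rfl, fun u v => Iff.rfl⟩
  · exact Setoid.le_def.mpr fun {u v} huv =>
      congrArg (fun b => (e b).2) (Quotient.sound huv)
  · funext u v
    apply propext
    constructor
    · rintro ⟨z, hz1, hz2, hz3⟩
      obtain ⟨w, hw1, hw2⟩ := factor_comp' h u v
      have h1 : (e (c1 u)).1 = (e (c1 z)).1 := congrArg (fun b => (e b).1) (Quotient.sound hz1)
      have h2 : (e (c1 w)).1 = (e (c1 v)).1 := congrArg (fun b => (e b).1) (Quotient.sound hw2)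
      exact ⟨w, ⟨hw1, h1.trans (hz3.trans h2.symm)⟩, hw2⟩
    · rintro ⟨z, ⟨hz1, hz2⟩, hz3⟩
      obtain ⟨w, hw1, hw2⟩ := h.2 u v
      have h1 : (e (c1 u)).1 = (e (c1 w)).1 := congrArg (fun b => (e b).1) (Quotient.sound hw1)
      have h2 : (e (c1 z)).1 = (e (c1 v)).1 := congrArg (fun b => (e b).1) (Quotient.sound hz3)
      exact ⟨w, hw1, hw2, h1.symm.trans (hz2.trans h2)⟩

private lemma exists_patom {θ θ' : Setoid X} (h : IsFactorPair θ θ')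
    (hinf : Infinite (Quotient θ)) {p : ℕ} (hp : p.Prime) (x y : X) :
    ∃ a : FactPair X, IsPAtom p a ∧ FactLE a ⟨(θ, θ'), h⟩ ∧
      (θ' x y → a.1.2 x y) ∧ (¬ θ x y → ¬ a.1.1 x y) := by
  classical
  haveI := hinf
  haveI : Nonempty X := ⟨(Classical.arbitrary (Quotient θ)).out⟩
  have hcard : Cardinal.mk (Quotient θ × Fin p) = Cardinal.mk (Quotient θ) := by
    rw [Cardinal.mk_prod, Cardinal.mk_fin, Cardinal.lift_uzero, Cardinal.lift_natCast]
    exact Cardinal.mul_eq_left (Cardinal.aleph0_le_mk _)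
      ((Cardinal.nat_lt_aleph0 p).le.trans (Cardinal.aleph0_le_mk _))
      (by exact_mod_cast hp.pos.ne')
  obtain ⟨g0⟩ := Cardinal.eq.mp hcard.symm
  by_cases hxy : Quotient.mk θ x = Quotient.mk θ y
  · obtain ⟨a, h1, h2, _, h4⟩ := master_construction h hp g0
    refine ⟨a, h1, h2, fun ht' => (h4 x y).mpr ⟨ht', by rw [hxy]⟩,
      fun hnt => absurd (Quotient.exact hxy) hnt⟩
  · have hne : g0 (Quotient.mk θ x) ≠ g0 (Quotient.mk θ y) :=
      fun hh => hxy (g0.injective hh)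
    have hi : (⟨0, hp.pos⟩ : Fin p) ≠ ⟨1, hp.one_lt⟩ := by
      intro hh
      have := congrArg Fin.val hh
      simp at this
    set u1 := g0 (Quotient.mk θ x) with hu1
    set u2 := g0 (Quotient.mk θ y) with hu2
    set t1 : Quotient θ × Fin p := (u1.1, ⟨0, hp.pos⟩) with ht1
    set t2 : Quotient θ × Fin p := (u1.1, ⟨1, hp.one_lt⟩) with ht2
    have ht12 : t1 ≠ t2 := fun hh => hi (congrArg Prod.snd hh)
    set σ1 := Equiv.swap u1 t1 with hσ1
    set u2p := σ1 u2 with hu2p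
    have hu2pt1 : u2p ≠ t1 := by
      intro hh
      have h1 : σ1 u1 = t1 := Equiv.swap_apply_left u1 t1
      exact hne (σ1.injective (hh.trans h1.symm)).symm
    set σ2 := Equiv.swap u2p t2 with hσ2
    set e := g0.trans (σ1.trans σ2) with he
    have hex : e (Quotient.mk θ x) = t1 := by
      show σ2 (σ1 u1) = t1
      rw [Equiv.swap_apply_left]
      exact Equiv.swap_apply_of_ne_of_ne (fun hh => hu2pt1 hh.symm) ht12
    have hey : e (Quotient.mk θ y) = t2 := by
      show σ2 (σ1 u2) = t2
      rw [← hu2p]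
      exact Equiv.swap_apply_left u2p t2
    obtain ⟨a, h1, h2, h3, h4⟩ := master_construction h hp e
    refine ⟨a, h1, h2, ?_, ?_⟩
    · intro ht'
      refine (h4 x y).mpr ⟨ht', ?_⟩
      rw [hex, hey]
    · intro _ ha
      have hv := (h3 x y).mp ha
      rw [hex, hey] at hv
      exact hi hv

end ConstructionForMainTheorem
/-- Let `(θ,θ')` be a factor pair of `X` with `X/θ` infinite and `p` prime. Then
(1) `(θ,θ')` is the least upper bound of the `p`-atoms below it;
(2) `θ` is the intersection of the first components of the `p`-atoms below `(θ,θ')`;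
(3) `θ'` is the union of the second components of the `p`-atoms below `(θ,θ')`. -/
theorem factPair_sup_of_p_atoms (X : Type*) (θ θ' : Setoid X) (h : IsFactorPair θ θ')
    (hinf : Infinite (Quotient θ)) (p : ℕ) (hp : p.Prime) :
    (∀ u : FactPair X,
      (∀ a : FactPair X, IsPAtom p a → FactLE a ⟨(θ, θ'), h⟩ → FactLE a u) ↔
        FactLE ⟨(θ, θ'), h⟩ u) ∧
    (∀ x y : X, θ x y ↔
      ∀ a : FactPair X, IsPAtom p a → FactLE a ⟨(θ, θ'), h⟩ → a.1.1 x y) ∧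
    (∀ x y : X, θ' x y ↔
      ∃ a : FactPair X, IsPAtom p a ∧ FactLE a ⟨(θ, θ'), h⟩ ∧ a.1.2 x y) := by
  haveI := hinf
  have hex := fun x y => exists_patom h hinf hp x y
  have part2 : ∀ x y : X, θ x y ↔
      ∀ a : FactPair X, IsPAtom p a → FactLE a ⟨(θ, θ'), h⟩ → a.1.1 x y := by
    intro x y
    constructor
    · intro hθ a _ hle
      exact Setoid.le_def.mp hle.1 hθ
    · intro H
      by_contra hc
      obtain ⟨a, h1, h2, _, h4⟩ := hex x y
      exact h4 hc (H a h1 h2)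
  have part3 : ∀ x y : X, θ' x y ↔
      ∃ a : FactPair X, IsPAtom p a ∧ FactLE a ⟨(θ, θ'), h⟩ ∧ a.1.2 x y := by
    intro x y
    constructor
    · intro hθ'
      obtain ⟨a, h1, h2, h3, _⟩ := hex x y
      exact ⟨a, h1, h2, h3 hθ'⟩
    · rintro ⟨a, _, hle, hab⟩
      exact Setoid.le_def.mp hle.2.1 hab
  refine ⟨?_, part2, part3⟩
  intro u
  constructor
  · intro H
    refine ⟨?_, ?_, ?_⟩
    · exact Setoid.le_def.mpr fun {x y} hxy =>
        (part2 x y).mpr fun a ha hle => Setoid.le_def.mp (H a ha hle).1 hxy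
    · refine Setoid.le_def.mpr fun {x y} hxy => ?_
      obtain ⟨a, h1, h2, h3⟩ := (part3 x y).mp hxy
      exact Setoid.le_def.mp (H a h1 h2).2.1 h3
    · have key : ∀ x y, Relation.Comp (⇑θ') (⇑u.1.1) x y →
          Relation.Comp (⇑u.1.1) (⇑θ') x y := by
        rintro x y ⟨w, hxw, hwy⟩
        obtain ⟨a, h1, h2, h3, _⟩ := hex x w
        have hcm := (H a h1 h2).2.2
        have hc : Relation.Comp (⇑a.1.2) (⇑u.1.1) x y := ⟨w, h3 hxw, hwy⟩
        rw [← hcm] at hc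
        obtain ⟨z, hz1, hz2⟩ := hc
        exact ⟨z, hz1, Setoid.le_def.mp h2.2.1 hz2⟩
      funext x y
      apply propext
      constructor
      · rintro ⟨z, hz1, hz2⟩
        obtain ⟨w, hw1, hw2⟩ := key y x ⟨z, θ'.symm' hz2, u.1.1.symm' hz1⟩
        exact ⟨w, θ'.symm' hw2, u.1.1.symm' hw1⟩
      · exact key x y
  · intro hle a ha hale
    exact factLE_trans hale hle
end

section
/- For an infinite set X, the orthomodular poset Fact(X) is atomistic: every element of Fact(X) is the least upper bound of the set of atoms below it. -/
section FactAux

universe u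

variable {X : Type u}

private lemma fp_eq (t : FactPair X) {x y : X} (h1 : t.1.1 x y) (h2 : t.1.2 x y) : x = y :=
  (t.2.1 x y).1 ⟨h1, h2⟩

private lemma fp_grid (t : FactPair X) (x y : X) : ∃ z, t.1.1 x z ∧ t.1.2 z y :=
  t.2.2 x y

private lemma sle {r s : Setoid X} (h : r ≤ s) {x y : X} (hx : r x y) : s x y :=
  Setoid.le_def.mp h hx

private lemma bot_apply {x y : X} (h : (⊥ : Setoid X) x y) : x = y := by
  simpa [Setoid.bot_def] using h

private lemma bot_apply' {x y : X} (h : x = y) : (⊥ : Setoid X) x y := by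
  simp [Setoid.bot_def, h]

private lemma factLE_trans_s10 {p q r : FactPair X} (h1 : FactLE p q) (h2 : FactLE q r) :
    FactLE p r := by
  obtain ⟨hq1, hq2, hq3⟩ := h1
  obtain ⟨hr1, hr2, hr3⟩ := h2
  refine ⟨hr1.trans hq1, hq2.trans hr2, ?_⟩
  have main : ∀ a b : X, Relation.Comp (⇑r.1.1) (⇑p.1.2) a b →
      Relation.Comp (⇑p.1.2) (⇑r.1.1) a b := by
    rintro a b ⟨z, haz, hzb⟩
    have h1' : Relation.Comp (⇑q.1.1) (⇑p.1.2) a b := ⟨z, sle hr1 haz, hzb⟩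
    rw [hq3] at h1'
    obtain ⟨w, hw1, hw2⟩ := h1'
    have h2' : Relation.Comp (⇑r.1.1) (⇑q.1.2) a b := ⟨z, haz, sle hq2 hzb⟩
    rw [hr3] at h2'
    obtain ⟨v, hv1, hv2⟩ := h2'
    have hwv : w = v := by
      apply fp_eq q
      · exact q.1.1.trans' hw2 (q.1.1.symm' (sle hr1 hv2))
      · exact q.1.2.trans' (q.1.2.symm' (sle hq2 hw1)) hv1
    exact ⟨w, hw1, hwv ▸ hv2⟩
  funext a b
  apply propext
  constructor
  · exact main a b
  · rintro ⟨z, haz, hzb⟩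
    obtain ⟨w, hw1, hw2⟩ := main b a ⟨z, r.1.1.symm' hzb, p.1.2.symm' haz⟩
    exact ⟨w, r.1.1.symm' hw2, p.1.2.symm' hw1⟩

private lemma factLE_zero (s : FactPair X) : FactLE (FactZero X) s := by
  refine ⟨le_top, bot_le, ?_⟩
  funext a b
  apply propext
  show (∃ z, s.1.1 a z ∧ (⊥ : Setoid X) z b) ↔ (∃ z, (⊥ : Setoid X) a z ∧ s.1.1 z b)
  constructor
  · rintro ⟨z, h1, h2⟩
    exact ⟨a, bot_apply' rfl, (bot_apply h2) ▸ h1⟩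
  · rintro ⟨z, h1, h2⟩
    exact ⟨b, (bot_apply h1) ▸ h2, bot_apply' rfl⟩

private lemma snd_ne_bot {s : FactPair X} (h : s ≠ FactZero X) :
    ∃ x y : X, x ≠ y ∧ s.1.2 x y := by
  by_contra hc
  push_neg at hc
  apply h
  have h2 : s.1.2 = (⊥ : Setoid X) := by
    apply Setoid.ext
    intro a b
    constructor
    · intro hab
      by_cases hab' : a = b
      · exact bot_apply' hab'
      · exact absurd hab (hc a b hab')
    · intro hab
      exact (bot_apply hab) ▸ s.1.2.refl' a
  have h1 : s.1.1 = (⊤ : Setoid X) := by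
    apply Setoid.ext
    intro a b
    constructor
    · intro _; simp [Setoid.top_def]
    · intro _
      obtain ⟨z, hz1, hz2⟩ := fp_grid s a b
      by_cases hzb : z = b
      · exact hzb ▸ hz1
      · exact absurd hz2 (hc z b hzb)
  apply Subtype.ext
  exact Prod.ext_iff.mpr ⟨h1, h2⟩

private lemma exists_equiv_two {A : Type*} {T : Type*} (e0 : A ≃ T) {a0 a1 : A} {t0 t1 : T}
    (ha : a0 ≠ a1) (ht : t0 ≠ t1) : ∃ e : A ≃ T, e a0 = t0 ∧ e a1 = t1 := by
  classical
  set e1 := e0.trans (Equiv.swap (e0 a0) t0) with he1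
  have h10 : e1 a0 = t0 := by simp [he1]
  have hx : t0 ≠ e1 a1 := by
    rw [← h10]
    exact fun h => ha (e1.injective h)
  refine ⟨e1.trans (Equiv.swap (e1 a1) t1), ?_, by simp⟩
  simp only [Equiv.trans_apply]
  rw [h10]
  exact Equiv.swap_apply_of_ne_of_ne hx ht

private lemma exists_equiv_fix {A : Type u} {a0 a1 : A} (hne : a0 ≠ a1) :
    ∃ (p : ℕ) (B : Type u) (e : A ≃ B × Fin p), p.Prime ∧
      (e a0).1 = (e a1).1 := by
  classical
  have fixit : ∀ (p : ℕ), 2 ≤ p → ∀ (B : Type u) (e0 : A ≃ B × Fin p),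
      ∃ e : A ≃ B × Fin p, (e a0).1 = (e a1).1 := by
    intro p hp2 B e0
    have hi : ((⟨0, by omega⟩ : Fin p)) ≠ (⟨1, by omega⟩ : Fin p) := by
      intro h
      have := congrArg Fin.val h
      simp at this
    have ht : (((e0 a0).1, (⟨0, by omega⟩ : Fin p)) : B × Fin p) ≠
        ((e0 a0).1, (⟨1, by omega⟩ : Fin p)) := by
      intro h
      exact hi (congrArg Prod.snd h)
    obtain ⟨e, he0, he1⟩ := exists_equiv_two e0 hne ht
    exact ⟨e, by rw [he0, he1]⟩
  obtain hfin | hinf := finite_or_infinite A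
  · haveI : Fintype A := Fintype.ofFinite A
    haveI : Nontrivial A := ⟨a0, a1, hne⟩
    have hn2 : 2 ≤ Fintype.card A := Fintype.one_lt_card
    set n := Fintype.card A with hn
    have hp : n.minFac.Prime := Nat.minFac_prime (by omega)
    have hdvd : n.minFac ∣ n := Nat.minFac_dvd n
    have hcard : Fintype.card A =
        Fintype.card (ULift.{u} (Fin (n / n.minFac)) × Fin n.minFac) := by
      simp [Fintype.card_prod, Nat.div_mul_cancel hdvd]
      exact hn.symm
    obtain ⟨e0⟩ := Fintype.card_eq.mp hcard
    obtain ⟨e, he⟩ := fixit n.minFac hp.two_le _ e0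
    exact ⟨n.minFac, _, e, hp, he⟩
  · have hA2 : Nonempty (A ≃ A × Fin 2) := by
      have hcc : Cardinal.mk A + Cardinal.mk A = Cardinal.mk A :=
        Cardinal.add_eq_self (Cardinal.infinite_iff.1 hinf)
      rw [Cardinal.add_def] at hcc
      obtain ⟨e1⟩ := Cardinal.eq.mp hcc
      exact ⟨((e1.symm.trans (Equiv.boolProdEquivSum A).symm).trans
        (Equiv.prodCongr finTwoEquiv (Equiv.refl A)).symm).trans (Equiv.prodComm (Fin 2) A)⟩
    obtain ⟨e0⟩ := hA2
    obtain ⟨e, he⟩ := fixit 2 (le_refl 2) A e0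
    exact ⟨2, A, e, Nat.prime_two, he⟩

end FactAux
section FactKey

universe u
variable {X : Type u}

private lemma key_atom (t : FactPair X) (x0 y0 : X) (hxy : ¬ t.1.1 x0 y0) :
    ∃ s : FactPair X, IsFactAtom s ∧ FactLE s t ∧ ¬ s.1.1 x0 y0 ∧
      ∀ z w : X, t.1.1 x0 z → t.1.1 y0 w → t.1.2 z w → s.1.2 z w := by
  classical
  set θ := t.1.1 with hθdef
  set θ' := t.1.2 with hθ'def
  obtain ⟨p, B, e, hp, hfst⟩ := exists_equiv_fix
    (show Quotient.mk θ x0 ≠ Quotient.mk θ y0 from fun h => hxy (Quotient.exact h))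
  set c : X → B × Fin p := fun x => e (Quotient.mk θ x) with hcdef
  have hceq : ∀ {x y : X}, c x = c y ↔ θ x y := by
    intro x y
    constructor
    · intro h
      exact Quotient.exact (e.injective h)
    · intro h
      show e _ = e _
      rw [Quotient.sound h]
  have hcsurj : ∀ v : B × Fin p, ∃ x, c x = v := by
    intro v
    refine ⟨(e.symm v).out, ?_⟩
    show e (Quotient.mk θ (e.symm v).out) = v
    rw [Quotient.out_eq, Equiv.apply_symm_apply]
  set ψ : Setoid X := ⟨fun x y => (c x).2 = (c y).2, ⟨fun _ => rfl, Eq.symm, Eq.trans⟩⟩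
    with hψdef
  set ψ' : Setoid X := ⟨fun x y => (c x).1 = (c y).1 ∧ θ' x y,
    ⟨fun x => ⟨rfl, θ'.refl' x⟩, fun h => ⟨h.1.symm, θ'.symm' h.2⟩,
     fun h1 h2 => ⟨h1.1.trans h2.1, θ'.trans' h1.2 h2.2⟩⟩⟩ with hψ'def
  have hψapp : ∀ {x y : X}, ψ x y ↔ (c x).2 = (c y).2 := fun {x y} => Iff.rfl
  have hψ'app : ∀ {x y : X}, ψ' x y ↔ ((c x).1 = (c y).1 ∧ θ' x y) := fun {x y} => Iff.rfl
  have hfp : IsFactorPair ψ ψ' := by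
    constructor
    · intro x y
      constructor
      · rintro ⟨h1, h2, h3⟩
        exact fp_eq t (hceq.mp (Prod.ext_iff.mpr ⟨h2, h1⟩)) h3
      · rintro rfl
        exact ⟨rfl, rfl, θ'.refl' x⟩
    · intro x y
      obtain ⟨x', hx'⟩ := hcsurj ((c y).1, (c x).2)
      obtain ⟨z, hz1, hz2⟩ := fp_grid t x' y
      have hcz : c z = ((c y).1, (c x).2) := by rw [← hx']; exact (hceq.mpr hz1).symm
      refine ⟨z, ?_, ?_, hz2⟩
      · show (c x).2 = (c z).2
        rw [hcz]
      · show (c z).1 = (c y).1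
        rw [hcz]
  set s : FactPair X := ⟨(ψ, ψ'), hfp⟩ with hsdef
  have hle : FactLE s t := by
    refine ⟨Setoid.le_def.mpr (fun {x y} h => (congrArg Prod.snd (hceq.mpr h) : ψ x y)),
      Setoid.le_def.mpr (fun {x y} h => h.2), ?_⟩
    funext a b
    apply propext
    show (∃ z, θ a z ∧ ψ' z b) ↔ (∃ z, ψ' a z ∧ θ z b)
    constructor
    · rintro ⟨z, h1, h2⟩
      obtain ⟨w, hw1, hw2⟩ := fp_grid t b a
      refine ⟨w, ⟨?_, θ'.symm' hw2⟩, θ.symm' hw1⟩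
      have hcab : (c a).1 = (c b).1 := by
        rw [congrArg Prod.fst (hceq.mpr h1)]
        exact h2.1
      rw [hcab, congrArg Prod.fst (hceq.mpr hw1)]
    · rintro ⟨w, hw, hwb⟩
      obtain ⟨z, hz1, hz2⟩ := fp_grid t a b
      refine ⟨z, hz1, ⟨?_, hz2⟩⟩
      rw [← congrArg Prod.fst (hceq.mpr hz1), hw.1, congrArg Prod.fst (hceq.mpr hwb)]
  have hcx0y0 : c x0 ≠ c y0 := fun h => hxy (hceq.mp h)
  have hnotψ : ¬ s.1.1 x0 y0 := by
    intro h
    exact hcx0y0 (Prod.ext_iff.mpr ⟨hfst, h⟩)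
  have hP2 : ∀ z w : X, θ x0 z → θ y0 w → θ' z w → s.1.2 z w := by
    intro z w h1 h2 h3
    refine ⟨?_, h3⟩
    rw [← congrArg Prod.fst (hceq.mpr h1), ← congrArg Prod.fst (hceq.mpr h2)]
    exact hfst
  -- a nontrivial ψ'-pair
  obtain ⟨x', hx'⟩ := hcsurj ((c x0).1, (c y0).2)
  obtain ⟨y1, hy1, hy2⟩ := fp_grid t x' x0
  have hcy1 : c y1 = ((c x0).1, (c y0).2) := by rw [← hx']; exact (hceq.mpr hy1).symm
  have hsnd : (c x0).2 ≠ (c y0).2 := by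
    intro h
    exact hcx0y0 (Prod.ext_iff.mpr ⟨hfst, h⟩)
  have hpair : ψ' x0 y1 ∧ x0 ≠ y1 := by
    constructor
    · refine ⟨?_, θ'.symm' hy2⟩
      rw [hcy1]
    · intro h
      apply hsnd
      rw [h, hcy1]
  have hs0 : FactZero X ≠ s := by
    intro h
    have hbot : (⊥ : Setoid X) = ψ' := congrArg (fun z => z.1.2) h
    have := hpair.1
    rw [← hbot] at this
    exact hpair.2 (bot_apply this)
  -- atomicity
  have hatom : IsFactAtom s := by
    refine ⟨⟨factLE_zero s, hs0⟩, ?_⟩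
    rintro y' ⟨_, hy0⟩ ⟨⟨hle1, hle2, _⟩, hne⟩
    apply hne
    set χ := y'.1.1 with hχdef
    set χ' := y'.1.2 with hχ'def
    obtain ⟨v, v', hvne, hvv'⟩ := snd_ne_bot (Ne.symm hy0)
    -- all χ'-classes are equinumerous
    have toQ : ∀ a : X, {w // χ' a w} ≃ Quotient χ := by
      intro a
      refine Equiv.ofBijective (fun w => Quotient.mk χ w.1) ⟨?_, ?_⟩
      · rintro ⟨w1, h1⟩ ⟨w2, h2⟩ h
        have hch : χ w1 w2 := Quotient.exact h
        exact Subtype.ext (fp_eq y' hch (χ'.trans' (χ'.symm' h1) h2))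
      · intro q
        obtain ⟨w, hw1, hw2⟩ := fp_grid y' q.out a
        refine ⟨⟨w, χ'.symm' hw2⟩, ?_⟩
        show Quotient.mk χ w = q
        rw [← q.out_eq]
        exact (Quotient.sound hw1).symm
    have classEquiv : ∀ a b : X, Nonempty ({w // χ' a w} ≃ {w // χ' b w}) :=
      fun a b => ⟨(toQ a).trans (toQ b).symm⟩
    -- each ψ'-class has exactly p elements
    have Ssurj : ∀ (b : X) (i : Fin p), ∃ z : X, ψ' b z ∧ (c z).2 = i := by
      intro x i
      obtain ⟨x', hx'⟩ := hcsurj ((c x).1, i)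
      obtain ⟨w, hw1, hw2⟩ := fp_grid t x' x
      have hcw : c w = ((c x).1, i) := by rw [← hx']; exact (hceq.mpr hw1).symm
      refine ⟨w, ⟨?_, θ'.symm' hw2⟩, ?_⟩
      · rw [hcw]
      · rw [hcw]
    have SEquiv : ∀ x : X, Nonempty ({w // ψ' x w} ≃ Fin p) := by
      intro x
      refine ⟨Equiv.ofBijective (fun w => (c w.1).2) ⟨?_, ?_⟩⟩
      · rintro ⟨w1, hw1⟩ ⟨w2, hw2⟩ h
        apply Subtype.ext
        apply fp_eq t
        · exact hceq.mp (Prod.ext_iff.mpr ⟨hw1.1.symm.trans hw2.1, h⟩)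
        · exact θ'.trans' (θ'.symm' hw1.2) hw2.2
      · intro i
        obtain ⟨z, hz1, hz2⟩ := Ssurj x i
        exact ⟨⟨z, hz1⟩, hz2⟩
    set K := {w // χ' v w} with hKdef
    haveI hKfin : Finite K := by
      have : Finite {w // ψ' v w} := Finite.of_equiv _ (Classical.choice (SEquiv v)).symm
      refine Finite.of_injective (fun w : K => (⟨w.1, sle hle2 w.2⟩ : {w // ψ' v w})) ?_
      intro a b h
      have h' : (⟨a.1, sle hle2 a.2⟩ : {w // ψ' v w}) = ⟨b.1, sle hle2 b.2⟩ := h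
      have h2 : a.1 = b.1 := congrArg (fun u : {w // ψ' v w} => u.1) h'
      exact Subtype.ext h2
    have hK2 : Nat.card K ≠ 1 := by
      have : Nontrivial K := ⟨⟨v, χ'.refl' v⟩, ⟨v', hvv'⟩, by
        intro h
        exact hvne (congrArg Subtype.val h)⟩
      have h1 := Finite.one_lt_card_iff_nontrivial.mpr this
      omega
    -- ψ' ≤ χ'
    have hsub : ∀ x w : X, ψ' x w → χ' x w := by
      intro x w hxw
      set S := {u // ψ' x u} with hSdef
      haveI : Finite S := Finite.of_equiv _ (Classical.choice (SEquiv x)).symm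
      set r : Setoid S := ⟨fun u1 u2 => χ' u1.1 u2.1,
        ⟨fun u => χ'.refl' u.1, fun h => χ'.symm' h, fun h1 h2 => χ'.trans' h1 h2⟩⟩ with hrdef
      have fiberEquiv : ∀ q : Quotient r, Nonempty ({u : S // Quotient.mk r u = q} ≃ K) := by
        intro q
        have e1 : {u : S // Quotient.mk r u = q} ≃ {z : X // χ' q.out.1 z} :=
          { toFun := fun u => ⟨u.1.1, by
              have hru : r u.1 q.out := Quotient.exact (u.2.trans q.out_eq.symm)
              exact χ'.symm' hru⟩
            invFun := fun z => ⟨⟨z.1, ψ'.trans' q.out.2 (sle hle2 z.2)⟩, by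
              have hr : r ⟨z.1, ψ'.trans' q.out.2 (sle hle2 z.2)⟩ q.out := χ'.symm' z.2
              exact (Quotient.sound hr).trans q.out_eq⟩
            left_inv := fun u => Subtype.ext (Subtype.ext rfl)
            right_inv := fun z => Subtype.ext rfl }
        obtain ⟨e2⟩ := classEquiv q.out.1 v
        exact ⟨e1.trans e2⟩
      have hcardS : Nat.card S = Nat.card (Quotient r) * Nat.card K := by
        have e3 : S ≃ (Quotient r) × K :=
          ((Equiv.sigmaFiberEquiv (Quotient.mk r)).symm.trans
            (Equiv.sigmaCongrRight (fun q => Classical.choice (fiberEquiv q)))).trans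
              (Equiv.sigmaEquivProd _ _)
        rw [Nat.card_congr e3, Nat.card_prod]
      have hcS : Nat.card S = p := by
        rw [Nat.card_congr (Classical.choice (SEquiv x))]
        simp
      have hdvd : Nat.card K ∣ p := ⟨Nat.card (Quotient r), by rw [← hcS, hcardS, mul_comm]⟩
      have hKp : Nat.card K = p := ((Nat.Prime.eq_one_or_self_of_dvd hp _ hdvd).resolve_left hK2)
      have hQ1 : Nat.card (Quotient r) = 1 := by
        have hp0 : 0 < p := hp.pos
        rw [hcS, hKp] at hcardS
        have h1p : Nat.card (Quotient r) * p = 1 * p := by rw [one_mul, ← hcardS]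
        exact Nat.eq_of_mul_eq_mul_right hp0 h1p
      haveI : Subsingleton (Quotient r) := (Nat.card_eq_one_iff_unique.mp hQ1).1
      have hxx : ψ' x x := ⟨rfl, θ'.refl' x⟩
      have heq : Quotient.mk r ⟨x, hxx⟩ = Quotient.mk r ⟨w, hxw⟩ := Subsingleton.elim _ _
      have hrxw : r ⟨x, hxx⟩ ⟨w, hxw⟩ := Quotient.exact heq
      exact hrxw
    have hχ'eq : χ' = ψ' := Setoid.ext (fun a b => ⟨fun h => sle hle2 h, fun h => hsub a b h⟩)
    have hχeq : χ = ψ := by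
      apply Setoid.ext
      intro a b
      constructor
      · intro hab
        obtain ⟨z, hz, hz2'⟩ := Ssurj b ((c a).2)
        have hχ'bz : χ' b z := hsub b z hz
        have hψaz : ψ a z := hz2'.symm
        have hχaz : χ a z := sle hle1 hψaz
        have hχbz : χ b z := χ.trans' (χ.symm' hab) hχaz
        have hbz : b = z := fp_eq y' hχbz hχ'bz
        show (c a).2 = (c b).2
        rw [hbz]
        exact hz2'.symm
      · intro hab
        exact sle hle1 hab
    apply Subtype.ext
    exact Prod.ext_iff.mpr ⟨hχeq, hχ'eq⟩
  exact ⟨s, hatom, hle, hnotψ, hP2⟩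

end FactKey
/-- For an infinite set `X`, `Fact X` is atomistic: every element is the least upper
bound of the atoms below it. -/
theorem factPair_atomistic (X : Type*) [Infinite X] (t : FactPair X) :
    ∀ u : FactPair X,
      (∀ a : FactPair X, IsFactAtom a → FactLE a t → FactLE a u) ↔ FactLE t u := by
  intro u
  constructor
  · intro H
    have h1 : ∀ {x y : X}, u.1.1 x y → t.1.1 x y := by
      intro x y hxy
      by_contra hc
      obtain ⟨s, hatom, hst, hs1, _⟩ := key_atom t x y hc
      obtain ⟨hsu1, _, _⟩ := H s hatom hst
      exact hs1 (sle hsu1 hxy)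
    have h2 : ∀ {x y : X}, t.1.2 x y → u.1.2 x y := by
      intro x y hxy
      by_cases hc : t.1.1 x y
      · have hxyeq : x = y := fp_eq t hc hxy
        exact hxyeq ▸ u.1.2.refl' x
      · obtain ⟨s, hatom, hst, _, hP⟩ := key_atom t x y hc
        obtain ⟨_, hsu2, _⟩ := H s hatom hst
        exact sle hsu2 (hP x y (t.1.1.refl' x) (t.1.1.refl' y) hxy)
    refine ⟨Setoid.le_def.mpr (fun {x y} h => h1 h),
      Setoid.le_def.mpr (fun {x y} h => h2 h), ?_⟩
    have main : ∀ x y : X, Relation.Comp (⇑u.1.1) (⇑t.1.2) x y →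
        Relation.Comp (⇑t.1.2) (⇑u.1.1) x y := by
      rintro x y ⟨z, hxz, hzy⟩
      have hθxz : t.1.1 x z := h1 hxz
      obtain ⟨w, hw1, hw2⟩ := fp_grid t y x
      have hθ'xw : t.1.2 x w := t.1.2.symm' hw2
      have hθwy : t.1.1 w y := t.1.1.symm' hw1
      refine ⟨w, hθ'xw, ?_⟩
      by_cases hwx : t.1.1 w x
      · have hwxeq : w = x := fp_eq t hwx (t.1.2.symm' hθ'xw)
        have hzy' : z = y := by
          apply fp_eq t
          · exact t.1.1.trans' (t.1.1.symm' hθxz) (hwxeq ▸ hθwy)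
          · exact hzy
        rw [hwxeq, ← hzy']
        exact hxz
      · obtain ⟨s, hatom, hst, _, hP⟩ := key_atom t w x hwx
        obtain ⟨hsu1, hsu2, hsu3⟩ := H s hatom hst
        have hψ'wx : s.1.2 w x :=
          hP w x (t.1.1.refl' w) (t.1.1.refl' x) (t.1.2.symm' hθ'xw)
        have hcomp : Relation.Comp (⇑s.1.2) (⇑u.1.1) w z := ⟨x, hψ'wx, hxz⟩
        rw [← hsu3] at hcomp
        obtain ⟨v, hv1, hv2⟩ := hcomp
        have hθ'vz : t.1.2 v z := sle hst.2.1 hv2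
        have hθwv : t.1.1 w v := h1 hv1
        have hvy : v = y := by
          apply fp_eq t
          · exact t.1.1.trans' (t.1.1.symm' hθwv) hθwy
          · exact t.1.2.trans' hθ'vz hzy
        rw [← hvy]
        exact hv1
    funext x y
    apply propext
    constructor
    · exact main x y
    · rintro ⟨z, ha, hb⟩
      obtain ⟨w, hw1, hw2⟩ := main y x ⟨z, u.1.1.symm' hb, t.1.2.symm' ha⟩
      exact ⟨w, u.1.1.symm' hw2, t.1.2.symm' hw1⟩
  · intro htu a _ hat
    exact factLE_trans_s10 hat htu
end
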